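/- Let n ≥ 2 and let α be an automorphism of G = ℤⁿ ⋊ GL(n,ℤ). Then α(ℤⁿ) = ℤⁿ, where ℤⁿ is identified with the normal subgroup {(x,1) : x ∈ ℤⁿ}. -/

import Mathlib

/-- The action of `GL(n,ℤ)` on `ℤⁿ` (written multiplicatively) by matrix
multiplication, as a homomorphism to the automorphism group. -/
def glAction (n : ℕ) : GL (Fin n) ℤ →* MulAut (Multiplicative (Fin n → ℤ)) where
  toFun g :=
    { toFun := fun v => Multiplicative.ofAdd
        ((g : Matrix (Fin n) (Fin n) ℤ).mulVec v.toAdd)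
      invFun := fun v => Multiplicative.ofAdd
        (((g⁻¹ : GL (Fin n) ℤ) : Matrix (Fin n) (Fin n) ℤ).mulVec v.toAdd)
      left_inv := by
        intro v
        simp [Matrix.mulVec_mulVec, ← Units.val_mul]
      right_inv := by
        intro v
        simp [Matrix.mulVec_mulVec, ← Units.val_mul]
      map_mul' := by
        intro v w
        simp [Matrix.mulVec_add, ofAdd_add] }
  map_one' := by
    ext v
    simp
  map_mul' := by
    intro g h
    refine MulEquiv.ext fun v => ?_
    show Multiplicative.ofAdd
        ((((g * h : GL (Fin n) ℤ)) : Matrix (Fin n) (Fin n) ℤ).mulVec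
          (Multiplicative.toAdd v)) =
      Multiplicative.ofAdd
        (((g : GL (Fin n) ℤ) : Matrix (Fin n) (Fin n) ℤ).mulVec
          (((h : GL (Fin n) ℤ) : Matrix (Fin n) (Fin n) ℤ).mulVec
            (Multiplicative.toAdd v)))
    rw [Units.val_mul, ← Matrix.mulVec_mulVec]

open SemidirectProduct Matrix

@[simp] lemma glAction_apply' {n : ℕ} (g : GL (Fin n) ℤ) (v : Multiplicative (Fin n → ℤ)) :
    glAction n g v
      = Multiplicative.ofAdd ((g : Matrix (Fin n) (Fin n) ℤ).mulVec v.toAdd) := rfl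

/-- A transvection as an element of `GL(n,ℤ)`. -/
def tGL {n : ℕ} (i j : Fin n) (hij : i ≠ j) (c : ℤ) : GL (Fin n) ℤ :=
  ⟨transvection i j c, transvection i j (-c),
   by rw [transvection_mul_transvection_same i j hij, add_neg_cancel, transvection_zero],
   by rw [transvection_mul_transvection_same i j hij, neg_add_cancel, transvection_zero]⟩

lemma tGL_mulVec {n : ℕ} (i j : Fin n) (hij : i ≠ j) (c : ℤ) (w : Fin n → ℤ) :
    ((tGL i j hij c : GL (Fin n) ℤ) : Matrix (Fin n) (Fin n) ℤ).mulVec w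
      = w + Pi.single i (c * w j) := by
  show (transvection i j c).mulVec w = _
  rw [transvection, add_mulVec, one_mulVec, single_mulVec]
  rfl

/-- Any abelian normal subgroup of `ℤⁿ ⋊ GL(n,ℤ)` is contained in `ℤⁿ`. -/
lemma abelian_normal_le_inl_range {n : ℕ} (hn : 2 ≤ n)
    (M : Subgroup (Multiplicative (Fin n → ℤ) ⋊[glAction n] GL (Fin n) ℤ))
    (hNorm : M.Normal)
    (hC : ∀ a ∈ M, ∀ b ∈ M, a * b = b * a) :
    M ≤ (inl : Multiplicative (Fin n → ℤ) →* _ ⋊[glAction n] GL (Fin n) ℤ).range := by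
  intro m hm
  rw [range_inl_eq_ker_rightHom, MonoidHom.mem_ker]
  show m.right = 1
  set g₀ : GL (Fin n) ℤ := m.right with hg₀
  -- the subgroup of ℤⁿ landing in M
  let K : AddSubgroup (Fin n → ℤ) :=
    { carrier := {w | inl (Multiplicative.ofAdd w) ∈ M}
      zero_mem' := by
        show inl (Multiplicative.ofAdd (0 : Fin n → ℤ)) ∈ M
        simpa using M.one_mem
      add_mem' := by
        intro a b ha hb
        show inl (Multiplicative.ofAdd (a + b)) ∈ M
        rw [ofAdd_add, _root_.map_mul]
        exact M.mul_mem ha hb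
      neg_mem' := by
        intro a ha
        show inl (Multiplicative.ofAdd (-a)) ∈ M
        rw [ofAdd_neg, map_inv]
        exact M.inv_mem ha }
  have hKmem : ∀ w : Fin n → ℤ, w ∈ K ↔ inl (Multiplicative.ofAdd w) ∈ M := fun _ => Iff.rfl
  -- commutators with ℤⁿ land in K
  have hK1 : ∀ x : Fin n → ℤ, x - (g₀ : Matrix (Fin n) (Fin n) ℤ).mulVec x ∈ K := by
    intro x
    have hconj : inl (Multiplicative.ofAdd x) * m * (inl (Multiplicative.ofAdd x))⁻¹ ∈ M :=
      hNorm.conj_mem m hm _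
    have h2 := M.mul_mem hconj (M.inv_mem hm)
    have heq : inl (Multiplicative.ofAdd x) * m * (inl (Multiplicative.ofAdd x))⁻¹ * m⁻¹
        = inl (Multiplicative.ofAdd
            (x - (g₀ : Matrix (Fin n) (Fin n) ℤ).mulVec x)) := by
      ext
      · simp only [mul_left, inv_left, left_inl, right_inl, mul_right, inv_right, one_left,
          glAction_apply']
        apply Multiplicative.toAdd.injective
        simp [toAdd_mul, mulVec_mulVec, ← Units.val_mul, sub_eq_add_neg, Matrix.mulVec_neg]
        abel
        rfl
      · simp only [mul_right, inv_right, right_inl]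
        group
    rw [hKmem, ← heq]
    exact h2
  -- K is GL-invariant
  have hK2 : ∀ (h : GL (Fin n) ℤ), ∀ w ∈ K, (h : Matrix (Fin n) (Fin n) ℤ).mulVec w ∈ K := by
    intro h w hw
    have hmem := hNorm.conj_mem _ ((hKmem w).mp hw) (inr h)
    have heq := (inl_aut (φ := glAction n) h (Multiplicative.ofAdd w)).symm
    rw [← _root_.map_inv] at hmem
    rw [heq] at hmem
    rw [hKmem]
    simpa using hmem
  -- elements of K are fixed by g₀
  have hK3 : ∀ w ∈ K, (g₀ : Matrix (Fin n) (Fin n) ℤ).mulVec w = w := by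
    intro w hw
    have hcomm := hC m hm _ ((hKmem w).mp hw)
    have hleft := congrArg SemidirectProduct.left hcomm
    simp only [mul_left, left_inl, right_inl, glAction_apply', Units.val_one, one_mulVec,
      ofAdd_toAdd] at hleft
    -- hleft : m.left * ofAdd (g₀ *ᵥ w) = ofAdd w * m.left  (roughly)
    have := mul_left_cancel (a := m.left)
      (hleft.trans (mul_comm (Multiplicative.ofAdd w) m.left))
    exact congrArg Multiplicative.toAdd this
  -- singles from nonzero elements of K
  have hsingle : ∀ w ∈ K, ∀ i j : Fin n, i ≠ j → Pi.single i (w j) ∈ K := by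
    intro w hw i j hij
    have h1 := hK2 (tGL i j hij 1) w hw
    rw [tGL_mulVec, one_mul] at h1
    have := K.sub_mem h1 hw
    simpa using this
  -- every mulVec by g₀ is the identity
  have hfix : ∀ y : Fin n → ℤ, (g₀ : Matrix (Fin n) (Fin n) ℤ).mulVec y = y := by
    by_contra hcon
    push_neg at hcon
    obtain ⟨x, hx⟩ := hcon
    have hwK := hK1 x
    set w : Fin n → ℤ := x - (g₀ : Matrix (Fin n) (Fin n) ℤ).mulVec x with hw
    have hwne : w ≠ 0 := sub_ne_zero.mpr (Ne.symm hx)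
    obtain ⟨j, hj⟩ := Function.ne_iff.mp hwne
    set d : ℤ := w j with hd
    have hdne : d ≠ 0 := by simpa using hj
    obtain ⟨i₀, hi₀⟩ := Fintype.exists_ne_of_one_lt_card
      (by simpa using lt_of_lt_of_le one_lt_two hn) j
    -- all singles Pi.single i d lie in K
    have hsing : ∀ i : Fin n, Pi.single i d ∈ K := by
      intro i
      by_cases hij : i = j
      · subst hij
        have hu : Pi.single i₀ d ∈ K := hsingle w hwK i₀ i hi₀
        have := hsingle _ hu i i₀ (Ne.symm hi₀)
        simpa using this
      · exact hsingle w hwK i j hij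
    -- d • x ∈ K
    have hdx : d • x ∈ K := by
      have heq : d • x = ∑ i : Fin n, (x i) • Pi.single i d := by
        funext k
        simp only [Pi.smul_apply, smul_eq_mul, Finset.sum_apply, Pi.single_apply, mul_ite,
          mul_zero]
        rw [Finset.sum_ite_eq]
        simp [mul_comm]
      rw [heq]
      exact AddSubgroup.sum_mem K (fun i _ => AddSubgroup.zsmul_mem K (hsing i) (x i))
    have := hK3 _ hdx
    rw [Matrix.mulVec_smul] at this
    exact hx (smul_right_injective (Fin n → ℤ) hdne this)
  -- conclude g₀ = 1
  apply Units.ext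
  ext i j
  have := congrFun (hfix (Pi.single j 1)) i
  rw [mulVec_single] at this
  simpa [Matrix.one_apply, Pi.single_apply, eq_comm] using this


/-- Every automorphism of `ℤⁿ ⋊ GL(n,ℤ)` (`n ≥ 2`) maps the normal subgroup
`ℤⁿ` onto itself. -/
theorem aut_preserves_Zn {n : ℕ} (hn : 2 ≤ n)
    (α : (Multiplicative (Fin n → ℤ) ⋊[glAction n] GL (Fin n) ℤ) ≃*
      (Multiplicative (Fin n → ℤ) ⋊[glAction n] GL (Fin n) ℤ)) :
    Subgroup.map α.toMonoidHom
        (SemidirectProduct.inl :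
          Multiplicative (Fin n → ℤ) →* _ ⋊[glAction n] GL (Fin n) ℤ).range =
      (SemidirectProduct.inl :
        Multiplicative (Fin n → ℤ) →* _ ⋊[glAction n] GL (Fin n) ℤ).range := by
  set N := (SemidirectProduct.inl :
      Multiplicative (Fin n → ℤ) →* _ ⋊[glAction n] GL (Fin n) ℤ).range with hN
  have hNnorm : N.Normal := by
    rw [hN, range_inl_eq_ker_rightHom]
    infer_instance
  have hNcomm : ∀ a ∈ N, ∀ b ∈ N, a * b = b * a := by
    rintro a ⟨u, rfl⟩ b ⟨v, rfl⟩
    rw [← _root_.map_mul, ← _root_.map_mul, mul_comm]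
  have key : ∀ (β : (Multiplicative (Fin n → ℤ) ⋊[glAction n] GL (Fin n) ℤ) ≃*
      (Multiplicative (Fin n → ℤ) ⋊[glAction n] GL (Fin n) ℤ)),
      Subgroup.map β.toMonoidHom N ≤ N := by
    intro β
    apply abelian_normal_le_inl_range hn
    · exact Subgroup.Normal.map hNnorm β.toMonoidHom β.surjective
    · rintro a ha b hb
      obtain ⟨x, hx, rfl⟩ := Subgroup.mem_map.mp ha
      obtain ⟨y, hy, rfl⟩ := Subgroup.mem_map.mp hb
      rw [← _root_.map_mul, ← _root_.map_mul, hNcomm x hx y hy]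
  have h1 : Subgroup.map α.toMonoidHom N ≤ N := key α
  have h2 : N ≤ Subgroup.map α.toMonoidHom N := by
    intro z hz
    refine Subgroup.mem_map.mpr ⟨α.symm z, key α.symm (Subgroup.mem_map.mpr ⟨z, hz, rfl⟩), ?_⟩
    exact α.apply_symm_apply z
  exact le_antisymm h1 h2
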